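/- Global existence and monotonicity of steady flows in a divergent nozzle. Let L > 0 and a ∈ C¹([0,L]) with a(x) > 0 and a'(x) > 0 on [0,L]. For any x₀ ∈ [0,L) and any data ρ₋ > 0, u₋ > 0 with u₋ ≠ 1, the initial value problem dρ/dx = (a'(x)/a(x)) ρu²/(1 − u²), du/dx = (a'(x)/a(x)) u/(u² − 1), (ρ,u)(x₀) = (ρ₋, u₋) has a unique C¹ solution on [x₀, L]; moreover, for every x ∈ (x₀, L]: if u₋ > 1 then u(x) > u₋ and 0 < ρ(x) < ρ₋, while if 0 < u₋ < 1 then 0 < u(x) < u₋ and ρ(x) > ρ₋. -/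

import Mathlib

/-!
Global existence, uniqueness and monotonicity of steady quasi-one-dimensional
isothermal flows in a divergent nozzle (Section 2.1 of the paper).
-/

open Set Filter

/-- The conserved quantity `F(v) = v²/2 - log v` of the velocity ODE. -/
noncomputable def nozF (v : ℝ) : ℝ := v ^ 2 / 2 - Real.log v

lemma nozF_one : nozF 1 = 1 / 2 := by simp [nozF]

lemma nozF_hasDerivAt {v : ℝ} (hv : v ≠ 0) : HasDerivAt nozF (v - 1 / v) v := by
  have h1 := (hasDerivAt_pow 2 v).div_const 2
  have h2 := Real.hasDerivAt_log hv
  have h3 := h1.sub h2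
  have : ((2 : ℕ) : ℝ) * v ^ (2 - 1) / 2 - v⁻¹ = v - 1 / v := by
    push_cast; ring
  rw [this] at h3
  exact h3

lemma nozF_continuousOn : ContinuousOn nozF {(0 : ℝ)}ᶜ := by
  have : ContinuousOn (fun v : ℝ => v ^ 2 / 2 - Real.log v) {(0 : ℝ)}ᶜ :=
    (((continuous_pow 2).continuousOn).div_const 2).sub Real.continuousOn_log
  exact this

lemma sq_sub_one_ne {v : ℝ} (h0 : 0 < v) (h1 : v ≠ 1) : v ^ 2 - 1 ≠ 0 := by
  intro h
  have h2 : (v - 1) * (v + 1) = 0 := by linear_combination h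
  rcases mul_eq_zero.1 h2 with h3 | h3
  · exact h1 (by linarith)
  · linarith

lemma nozF_strictMonoOn : StrictMonoOn nozF (Ici 1) := by
  apply strictMonoOn_of_hasDerivWithinAt_pos (f' := fun v => v - 1 / v) (convex_Ici 1)
  · apply nozF_continuousOn.mono
    intro x hx
    simp only [mem_compl_iff, mem_singleton_iff]
    intro h
    rw [h] at hx
    exact absurd hx (by norm_num)
  · intro x hx
    rw [interior_Ici] at hx
    exact (nozF_hasDerivAt (lt_trans zero_lt_one hx).ne').hasDerivWithinAt
  · intro x hx
    rw [interior_Ici] at hx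
    have hx1 : (1:ℝ) < x := hx
    have : 1 / x < x := by
      rw [div_lt_iff₀ (by linarith)]
      nlinarith
    linarith

lemma nozF_strictAntiOn : StrictAntiOn nozF (Ioc 0 1) := by
  apply strictAntiOn_of_hasDerivWithinAt_neg (f' := fun v => v - 1 / v) (convex_Ioc 0 1)
  · apply nozF_continuousOn.mono
    intro x hx
    simp only [mem_compl_iff, mem_singleton_iff]
    intro h
    rw [h] at hx
    exact absurd hx.1 (by norm_num)
  · intro x hx
    rw [interior_Ioc] at hx
    exact (nozF_hasDerivAt hx.1.ne').hasDerivWithinAt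
  · intro x hx
    rw [interior_Ioc] at hx
    have : x < 1 / x := by
      rw [lt_div_iff₀ hx.1]
      nlinarith [hx.1, hx.2]
    linarith

lemma nozF_gt_half {v : ℝ} (h0 : 0 < v) (h1 : v ≠ 1) : 1 / 2 < nozF v := by
  have h := Real.log_lt_sub_one_of_pos h0 h1
  have h2 := sq_nonneg (v - 1)
  unfold nozF
  nlinarith

lemma nozP_exists {y : ℝ} (hy : 1 / 2 < y) : ∃ v, 1 < v ∧ nozF v = y := by
  have hB : (1 : ℝ) ≤ 2 * y + 2 := by linarith
  have hBpos : (0 : ℝ) < 2 * y + 2 := by linarith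
  have hFB : y ≤ nozF (2 * y + 2) := by
    have := Real.log_le_sub_one_of_pos hBpos
    unfold nozF
    nlinarith
  have hsub : Icc (nozF 1) (nozF (2 * y + 2)) ⊆ nozF '' Icc 1 (2 * y + 2) := by
    apply intermediate_value_Icc hB
    apply nozF_continuousOn.mono
    intro x hx
    simp only [mem_compl_iff, mem_singleton_iff]
    intro h
    rw [h] at hx
    linarith [hx.1]
  obtain ⟨v, hv, hveq⟩ := hsub ⟨by rw [nozF_one]; exact hy.le, hFB⟩
  refine ⟨v, ?_, hveq⟩
  rcases eq_or_lt_of_le hv.1 with h | h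
  · exfalso
    rw [← h, nozF_one] at hveq
    linarith
  · exact h

lemma nozM_exists {y : ℝ} (hy : 1 / 2 < y) : ∃ v, (0 < v ∧ v < 1) ∧ nozF v = y := by
  set t := Real.exp (-(y + 1)) with ht
  have ht0 : 0 < t := Real.exp_pos _
  have ht1 : t < 1 := Real.exp_lt_one_iff.2 (by linarith)
  have hlogt : Real.log t = -(y + 1) := Real.log_exp _
  have hFt : y ≤ nozF t := by
    unfold nozF
    rw [hlogt]
    nlinarith [sq_nonneg t]
  have hsub : Icc (nozF 1) (nozF t) ⊆ nozF '' Icc t 1 := by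
    apply intermediate_value_Icc' ht1.le
    apply nozF_continuousOn.mono
    intro x hx
    simp only [mem_compl_iff, mem_singleton_iff]
    intro h
    rw [h] at hx
    linarith [hx.1]
  obtain ⟨v, hv, hveq⟩ := hsub ⟨by rw [nozF_one]; exact hy.le, hFt⟩
  refine ⟨v, ⟨lt_of_lt_of_le ht0 hv.1, ?_⟩, hveq⟩
  rcases eq_or_lt_of_le hv.2 with h | h
  · exfalso
    rw [h, nozF_one] at hveq
    linarith
  · exact h

open Classical in
noncomputable def nozP (y : ℝ) : ℝ :=
  if h : ∃ v, 1 < v ∧ nozF v = y then h.choose else 1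

open Classical in
noncomputable def nozM (y : ℝ) : ℝ :=
  if h : ∃ v, (0 < v ∧ v < 1) ∧ nozF v = y then h.choose else 1

lemma nozP_spec {y : ℝ} (hy : 1 / 2 < y) : 1 < nozP y ∧ nozF (nozP y) = y := by
  have h := nozP_exists hy
  rw [nozP, dif_pos h]
  exact h.choose_spec

lemma nozM_spec {y : ℝ} (hy : 1 / 2 < y) : (0 < nozM y ∧ nozM y < 1) ∧ nozF (nozM y) = y := by
  have h := nozM_exists hy
  rw [nozM, dif_pos h]
  exact h.choose_spec

lemma nozP_continuousAt {y : ℝ} (hy : 1 / 2 < y) : ContinuousAt nozP y := by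
  rw [Metric.continuousAt_iff]
  intro ε hε
  obtain ⟨hv1, hveq⟩ := nozP_spec hy
  set v := nozP y with hv
  set ε' := min ε ((v - 1) / 2) with hε'
  have hε'pos : 0 < ε' := lt_min hε (by linarith)
  have hε'le : ε' ≤ ε := min_le_left _ _
  have h1 : 1 < v - ε' := by
    have : ε' ≤ (v - 1) / 2 := min_le_right _ _
    linarith
  have hmem1 : v - ε' ∈ Ici (1 : ℝ) := h1.le
  have hmem2 : v + ε' ∈ Ici (1 : ℝ) := by
    simp only [mem_Ici]; linarith
  have hvmem : v ∈ Ici (1 : ℝ) := hv1.le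
  have hy1 : nozF (v - ε') < y := by
    rw [← hveq]
    exact nozF_strictMonoOn hmem1 hvmem (by linarith)
  have hy2 : y < nozF (v + ε') := by
    rw [← hveq]
    exact nozF_strictMonoOn hvmem hmem2 (by linarith)
  refine ⟨min (y - nozF (v - ε')) (nozF (v + ε') - y), lt_min (by linarith) (by linarith), ?_⟩
  intro z hz
  rw [Real.dist_eq] at hz ⊢
  have habs := abs_lt.1 hz
  have hmin1 := min_le_left (y - nozF (v - ε')) (nozF (v + ε') - y)
  have hmin2 := min_le_right (y - nozF (v - ε')) (nozF (v + ε') - y)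
  have hz1 : nozF (v - ε') < z := by linarith
  have hz2 : z < nozF (v + ε') := by linarith
  have hhalf : nozF 1 < nozF (v - ε') := nozF_strictMonoOn (mem_Ici.2 le_rfl) hmem1 h1
  rw [nozF_one] at hhalf
  have hzhalf : 1 / 2 < z := by linarith
  obtain ⟨hw1, hweq⟩ := nozP_spec hzhalf
  set w := nozP z with hw
  have hwl : v - ε' < w := by
    by_contra h
    push_neg at h
    have := nozF_strictMonoOn.monotoneOn (mem_Ici.2 hw1.le) hmem1 h
    rw [hweq] at this
    linarith
  have hwu : w < v + ε' := by
    by_contra h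
    push_neg at h
    have := nozF_strictMonoOn.monotoneOn hmem2 (mem_Ici.2 hw1.le) h
    rw [hweq] at this
    linarith
  rw [abs_lt]
  constructor <;> linarith

lemma nozM_continuousAt {y : ℝ} (hy : 1 / 2 < y) : ContinuousAt nozM y := by
  rw [Metric.continuousAt_iff]
  intro ε hε
  obtain ⟨⟨hv0, hv1⟩, hveq⟩ := nozM_spec hy
  set v := nozM y with hv
  set ε' := min ε (min (v / 2) ((1 - v) / 2)) with hε'
  have hε'pos : 0 < ε' := lt_min hε (lt_min (by linarith) (by linarith))
  have hε'le : ε' ≤ ε := min_le_left _ _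
  have hεv : ε' ≤ v / 2 := le_trans (min_le_right _ _) (min_le_left _ _)
  have hεv1 : ε' ≤ (1 - v) / 2 := le_trans (min_le_right _ _) (min_le_right _ _)
  have hmem1 : v - ε' ∈ Ioc (0 : ℝ) 1 := ⟨by linarith, by linarith⟩
  have hmem2 : v + ε' ∈ Ioc (0 : ℝ) 1 := ⟨by linarith, by linarith⟩
  have hvmem : v ∈ Ioc (0 : ℝ) 1 := ⟨hv0, hv1.le⟩
  have hy1 : nozF (v + ε') < y := by
    rw [← hveq]
    exact nozF_strictAntiOn hvmem hmem2 (by linarith)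
  have hy2 : y < nozF (v - ε') := by
    rw [← hveq]
    exact nozF_strictAntiOn hmem1 hvmem (by linarith)
  refine ⟨min (y - nozF (v + ε')) (nozF (v - ε') - y), lt_min (by linarith) (by linarith), ?_⟩
  intro z hz
  rw [Real.dist_eq] at hz ⊢
  have habs := abs_lt.1 hz
  have hmin1 := min_le_left (y - nozF (v + ε')) (nozF (v - ε') - y)
  have hmin2 := min_le_right (y - nozF (v + ε')) (nozF (v - ε') - y)
  have hz1 : nozF (v + ε') < z := by linarith
  have hz2 : z < nozF (v - ε') := by linarith
  have hhalf : nozF 1 < nozF (v + ε') := nozF_strictAntiOn hmem2 ⟨by norm_num, le_rfl⟩ (by linarith)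
  rw [nozF_one] at hhalf
  have hzhalf : 1 / 2 < z := by linarith
  obtain ⟨⟨hw0, hw1⟩, hweq⟩ := nozM_spec hzhalf
  set w := nozM z with hw
  have hwmem : w ∈ Ioc (0 : ℝ) 1 := ⟨hw0, hw1.le⟩
  have hwl : v - ε' < w := by
    by_contra h
    push_neg at h
    have := nozF_strictAntiOn.antitoneOn hwmem hmem1 h
    rw [hweq] at this
    linarith
  have hwu : w < v + ε' := by
    by_contra h
    push_neg at h
    have := nozF_strictAntiOn.antitoneOn hmem2 hwmem h
    rw [hweq] at this
    linarith
  rw [abs_lt]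
  constructor <;> linarith

lemma nozP_hasDerivAt {y : ℝ} (hy : 1 / 2 < y) :
    HasDerivAt nozP (nozP y / (nozP y ^ 2 - 1)) y := by
  obtain ⟨hv1, hveq⟩ := nozP_spec hy
  have hv0 : (0:ℝ) < nozP y := by linarith
  have hD : HasDerivAt nozF (nozP y - 1 / nozP y) (nozP y) := nozF_hasDerivAt hv0.ne'
  have hne : nozP y - 1 / nozP y ≠ 0 := by
    have : 1 / nozP y < 1 := by
      rw [div_lt_one hv0]; exact hv1
    intro h
    have : nozP y = 1 / nozP y := by linarith
    linarith
  have hfg : ∀ᶠ z in nhds y, nozF (nozP z) = z := by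
    filter_upwards [isOpen_Ioi.mem_nhds (show y ∈ Ioi (1 / 2 : ℝ) from hy)] with z hz
    exact (nozP_spec hz).2
  have hder := HasDerivAt.of_local_left_inverse (nozP_continuousAt hy) hD hne hfg
  have hsq := sq_sub_one_ne hv0 hv1.ne'
  have heq : (nozP y - 1 / nozP y)⁻¹ = nozP y / (nozP y ^ 2 - 1) := by
    rw [inv_eq_one_div, div_eq_div_iff hne hsq]
    field_simp
  rwa [heq] at hder

lemma nozM_hasDerivAt {y : ℝ} (hy : 1 / 2 < y) :
    HasDerivAt nozM (nozM y / (nozM y ^ 2 - 1)) y := by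
  obtain ⟨⟨hv0, hv1⟩, hveq⟩ := nozM_spec hy
  have hD : HasDerivAt nozF (nozM y - 1 / nozM y) (nozM y) := nozF_hasDerivAt hv0.ne'
  have hne : nozM y - 1 / nozM y ≠ 0 := by
    have : 1 < 1 / nozM y := by
      rw [lt_div_iff₀ hv0]; linarith
    intro h
    have : nozM y = 1 / nozM y := by linarith
    linarith
  have hfg : ∀ᶠ z in nhds y, nozF (nozM z) = z := by
    filter_upwards [isOpen_Ioi.mem_nhds (show y ∈ Ioi (1 / 2 : ℝ) from hy)] with z hz
    exact (nozM_spec hz).2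
  have hder := HasDerivAt.of_local_left_inverse (nozM_continuousAt hy) hD hne hfg
  have hsq := sq_sub_one_ne hv0 hv1.ne
  have heq : (nozM y - 1 / nozM y)⁻¹ = nozM y / (nozM y ^ 2 - 1) := by
    rw [inv_eq_one_div, div_eq_div_iff hne hsq]
    field_simp
  rwa [heq] at hder

/-- The conserved quantity `nozF (u x) - log (a x)` along any solution of the velocity ODE. -/
lemma noz_conserved {L : ℝ} {a a' : ℝ → ℝ}
    (ha : ∀ x ∈ Icc (0 : ℝ) L, HasDerivWithinAt a (a' x) (Icc 0 L) x)
    (hapos : ∀ x ∈ Icc (0 : ℝ) L, 0 < a x)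
    {x₀ : ℝ} (hx₀ : x₀ ∈ Icc (0 : ℝ) L) {u₂ : ℝ → ℝ}
    (hu₂D : ∀ x ∈ Icc x₀ L,
      HasDerivWithinAt u₂ (a' x / a x * (u₂ x / (u₂ x ^ 2 - 1))) (Icc x₀ L) x)
    {s : ℝ} (hs : s ∈ Icc x₀ L)
    (hin : ∀ t ∈ Ico x₀ s, 0 < u₂ t ∧ u₂ t ≠ 1)
    (hus : u₂ s ≠ 0) :
    nozF (u₂ s) - Real.log (a s) = nozF (u₂ x₀) - Real.log (a x₀) := by
  have hsubL : Icc x₀ L ⊆ Icc 0 L := Icc_subset_Icc hx₀.1 le_rfl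
  have hsubs : Icc x₀ s ⊆ Icc x₀ L := Icc_subset_Icc le_rfl hs.2
  have hne : ∀ t ∈ Icc x₀ s, u₂ t ≠ 0 := by
    intro t ht
    rcases eq_or_lt_of_le ht.2 with h | h
    · rw [h]; exact hus
    · exact (hin t ⟨ht.1, h⟩).1.ne'
  have hu₂c : ContinuousOn u₂ (Icc x₀ L) := fun t ht => (hu₂D t ht).continuousWithinAt
  have hac : ContinuousOn a (Icc x₀ L) :=
    fun t ht => ((ha t (hsubL ht)).continuousWithinAt).mono hsubL
  have hane : ∀ t ∈ Icc x₀ L, a t ≠ 0 := fun t ht => (hapos t (hsubL ht)).ne'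
  have hGc : ContinuousOn (fun t => nozF (u₂ t) - Real.log (a t)) (Icc x₀ s) := by
    simp only [nozF]
    exact ((((hu₂c.mono hsubs).pow 2).div_const 2).sub
      ((hu₂c.mono hsubs).log hne)).sub
      ((hac.mono hsubs).log (fun t ht => hane t (hsubs ht)))
  have hderiv : ∀ t ∈ Ico x₀ s,
      HasDerivWithinAt (fun t => nozF (u₂ t) - Real.log (a t)) 0 (Ici t) t := by
    intro t ht
    have htL : t ∈ Icc x₀ L := ⟨ht.1, ht.2.le.trans hs.2⟩
    obtain ⟨hu0, hu1⟩ := hin t ht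
    have hu0' : u₂ t ≠ 0 := hu0.ne'
    have hsq := sq_sub_one_ne hu0 hu1
    have ha0 : a t ≠ 0 := hane t htL
    have h1 : HasDerivWithinAt (fun t => nozF (u₂ t))
        ((u₂ t - 1 / u₂ t) * (a' t / a t * (u₂ t / (u₂ t ^ 2 - 1)))) (Icc x₀ L) t :=
      (nozF_hasDerivAt hu0').comp_hasDerivWithinAt t (hu₂D t htL)
    have h2 : HasDerivWithinAt (fun t => Real.log (a t)) (a' t / a t) (Icc x₀ L) t :=
      ((ha t (hsubL htL)).mono hsubL).log ha0
    have h3 := h1.sub h2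
    have hval : (u₂ t - 1 / u₂ t) * (a' t / a t * (u₂ t / (u₂ t ^ 2 - 1))) - a' t / a t = 0 := by
      field_simp
      ring
    rw [hval] at h3
    apply h3.mono_of_mem_nhdsWithin
    apply mem_of_superset (Icc_mem_nhdsGE_of_mem ⟨le_rfl, lt_of_lt_of_le ht.2 hs.2⟩)
    exact Icc_subset_Icc htL.1 le_rfl
  exact constant_of_has_deriv_right_zero hGc hderiv s ⟨hs.1, le_rfl⟩

/-- The common core of the two branches (supersonic/subsonic). -/
theorem noz_aux
    (L : ℝ) (hL : 0 < L) (a a' : ℝ → ℝ)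
    (ha : ∀ x ∈ Set.Icc (0 : ℝ) L, HasDerivWithinAt a (a' x) (Set.Icc 0 L) x)
    (ha'cont : ContinuousOn a' (Set.Icc 0 L))
    (hapos : ∀ x ∈ Set.Icc (0 : ℝ) L, 0 < a x)
    (ha'pos : ∀ x ∈ Set.Icc (0 : ℝ) L, 0 < a' x)
    (x₀ : ℝ) (hx₀ : x₀ ∈ Set.Ico (0 : ℝ) L) (ρm um : ℝ)
    (hρm : 0 < ρm) (hum : 0 < um) (hum1 : um ≠ 1)
    (B : Set ℝ) (phi : ℝ → ℝ)
    (hBopen : IsOpen B) (hBsub : ∀ v ∈ B, 0 < v ∧ v ≠ 1)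
    (hBfr : ∀ v ∈ closure B, v ∉ B → v = 0 ∨ v = 1)
    (humB : um ∈ B)
    (hinj : Set.InjOn nozF B)
    (hphi : ∀ y, 1 / 2 < y → phi y ∈ B ∧ nozF (phi y) = y)
    (hphiD : ∀ y, 1 / 2 < y → HasDerivAt phi (phi y / (phi y ^ 2 - 1)) y)
    (hord : ∀ y, nozF um < y → 1 / 2 < y →
      (1 < um → um < phi y) ∧ (um < 1 → phi y < um)) :
    ∃ ρ u : ℝ → ℝ,
        ContDiffOn ℝ 1 ρ (Set.Icc x₀ L) ∧ ContDiffOn ℝ 1 u (Set.Icc x₀ L) ∧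
        ρ x₀ = ρm ∧ u x₀ = um ∧
        (∀ x ∈ Set.Icc x₀ L,
            HasDerivWithinAt ρ (a' x / a x * (ρ x * u x ^ 2 / (1 - u x ^ 2)))
              (Set.Icc x₀ L) x ∧
            HasDerivWithinAt u (a' x / a x * (u x / (u x ^ 2 - 1)))
              (Set.Icc x₀ L) x) ∧
        (∀ ρ₂ u₂ : ℝ → ℝ,
          (∀ x ∈ Set.Icc x₀ L,
              HasDerivWithinAt ρ₂ (a' x / a x * (ρ₂ x * u₂ x ^ 2 / (1 - u₂ x ^ 2)))
                (Set.Icc x₀ L) x ∧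
              HasDerivWithinAt u₂ (a' x / a x * (u₂ x / (u₂ x ^ 2 - 1)))
                (Set.Icc x₀ L) x) →
          ρ₂ x₀ = ρm → u₂ x₀ = um →
          ∀ x ∈ Set.Icc x₀ L, ρ₂ x = ρ x ∧ u₂ x = u x) ∧
        (∀ x ∈ Set.Ioc x₀ L,
          (1 < um → um < u x ∧ 0 < ρ x ∧ ρ x < ρm) ∧
          (um < 1 → 0 < u x ∧ u x < um ∧ ρm < ρ x)) := by
  have hx₀0 := hx₀.1
  have hx₀L := hx₀.2
  have hx₀Icc : x₀ ∈ Icc (0 : ℝ) L := ⟨hx₀0, hx₀L.le⟩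
  have hLIcc : L ∈ Icc (0 : ℝ) L := ⟨hL.le, le_rfl⟩
  have hsubL : Icc x₀ L ⊆ Icc 0 L := Icc_subset_Icc hx₀0 le_rfl
  have hane : ∀ x ∈ Icc (0 : ℝ) L, a x ≠ 0 := fun x hx => (hapos x hx).ne'
  have hamono : StrictMonoOn a (Icc 0 L) := by
    apply strictMonoOn_of_hasDerivWithinAt_pos (f' := a') (convex_Icc 0 L)
      (fun x hx => (ha x hx).continuousWithinAt)
    · intro x hx
      exact (ha x (interior_subset hx)).mono interior_subset
    · intro x hx
      exact ha'pos x (interior_subset hx)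
  set W : ℝ → ℝ := fun x => nozF um + (Real.log (a x) - Real.log (a x₀)) with hWdef
  have humhalf : 1 / 2 < nozF um := nozF_gt_half hum hum1
  have hWmono : ∀ x ∈ Icc x₀ L, nozF um ≤ W x ∧ (x₀ < x → nozF um < W x) := by
    intro x hx
    have hxIcc := hsubL hx
    constructor
    · have h1 : a x₀ ≤ a x := hamono.monotoneOn hx₀Icc hxIcc hx.1
      have h2 := Real.log_le_log (hapos x₀ hx₀Icc) h1
      simp only [hWdef]
      linarith
    · intro h
      have h1 : a x₀ < a x := hamono hx₀Icc hxIcc h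
      have h2 := Real.log_lt_log (hapos x₀ hx₀Icc) h1
      simp only [hWdef]
      linarith
  have hWhalf : ∀ x ∈ Icc x₀ L, 1 / 2 < W x :=
    fun x hx => lt_of_lt_of_le humhalf (hWmono x hx).1
  have hW : ∀ x ∈ Icc x₀ L, HasDerivWithinAt W (a' x / a x) (Icc x₀ L) x := by
    intro x hx
    have h1 : HasDerivWithinAt (fun x => Real.log (a x)) (a' x / a x) (Icc x₀ L) x :=
      ((ha x (hsubL hx)).mono hsubL).log (hane x (hsubL hx))
    exact (h1.sub_const (Real.log (a x₀))).const_add (nozF um)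
  set u : ℝ → ℝ := fun x => phi (W x) with hudef
  set ρ : ℝ → ℝ := fun x => ρm * Real.exp ((um ^ 2 - u x ^ 2) / 2) with hρdef
  have huB : ∀ x ∈ Icc x₀ L, u x ∈ B := fun x hx => (hphi _ (hWhalf x hx)).1
  have hFu : ∀ x ∈ Icc x₀ L, nozF (u x) = W x := fun x hx => (hphi _ (hWhalf x hx)).2
  have hu0 : ∀ x ∈ Icc x₀ L, 0 < u x := fun x hx => (hBsub _ (huB x hx)).1
  have hu1 : ∀ x ∈ Icc x₀ L, u x ≠ 1 := fun x hx => (hBsub _ (huB x hx)).2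
  have husq : ∀ x ∈ Icc x₀ L, u x ^ 2 - 1 ≠ 0 :=
    fun x hx => sq_sub_one_ne (hu0 x hx) (hu1 x hx)
  have hW₀ : W x₀ = nozF um := by simp only [hWdef]; ring
  have hux₀ : u x₀ = um := by
    have h1 := hphi (nozF um) humhalf
    have : u x₀ = phi (nozF um) := by rw [hudef]; simp only [hW₀]
    rw [this]
    exact hinj h1.1 humB h1.2
  have hρx₀ : ρ x₀ = ρm := by
    simp only [hρdef, hux₀, sub_self, zero_div, Real.exp_zero, mul_one]
  have huD : ∀ x ∈ Icc x₀ L,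
      HasDerivWithinAt u (a' x / a x * (u x / (u x ^ 2 - 1))) (Icc x₀ L) x := by
    intro x hx
    have h := (hphiD (W x) (hWhalf x hx)).comp_hasDerivWithinAt x (hW x hx)
    rw [mul_comm] at h
    exact h
  have hρD : ∀ x ∈ Icc x₀ L,
      HasDerivWithinAt ρ (a' x / a x * (ρ x * u x ^ 2 / (1 - u x ^ 2))) (Icc x₀ L) x := by
    intro x hx
    have h1 := (((huD x hx).pow 2).const_sub (um ^ 2)).div_const 2
    have h2 := h1.exp.const_mul ρm
    have ha0 : a x ≠ 0 := hane x (hsubL hx)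
    have hsq := husq x hx
    have h1m : (1 : ℝ) - u x ^ 2 ≠ 0 := fun h => hsq (by linarith)
    refine h2.congr_deriv ?_
    simp only [hρdef, Pi.pow_apply]
    push_cast
    field_simp
    ring
  have hucont : ContinuousOn u (Icc x₀ L) := fun x hx => (huD x hx).continuousWithinAt
  have hρcont : ContinuousOn ρ (Icc x₀ L) := fun x hx => (hρD x hx).continuousWithinAt
  have hacont : ContinuousOn a (Icc x₀ L) :=
    fun x hx => ((ha x (hsubL hx)).continuousWithinAt).mono hsubL
  have ha'c : ContinuousOn a' (Icc x₀ L) := ha'cont.mono hsubL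
  have hUD : UniqueDiffOn ℝ (Icc x₀ L) := uniqueDiffOn_Icc hx₀L
  have hcd : ∀ f g : ℝ → ℝ, (∀ x ∈ Icc x₀ L, HasDerivWithinAt f (g x) (Icc x₀ L) x) →
      ContinuousOn g (Icc x₀ L) → ContDiffOn ℝ 1 f (Icc x₀ L) := by
    intro f g hf hg
    rw [show (1 : WithTop ℕ∞) = 0 + 1 by norm_num, contDiffOn_succ_iff_derivWithin hUD]
    refine ⟨fun x hx => (hf x hx).differentiableWithinAt, by simp, ?_⟩
    rw [contDiffOn_zero]
    exact hg.congr (fun x hx => (hf x hx).derivWithin (hUD x hx))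
  have hucd : ContDiffOn ℝ 1 u (Icc x₀ L) := by
    apply hcd u (fun x => a' x / a x * (u x / (u x ^ 2 - 1))) huD
    exact (ha'c.div hacont (fun x hx => hane x (hsubL hx))).mul
      (hucont.div ((hucont.pow 2).sub continuousOn_const) husq)
  have hρcd : ContDiffOn ℝ 1 ρ (Icc x₀ L) := by
    apply hcd ρ (fun x => a' x / a x * (ρ x * u x ^ 2 / (1 - u x ^ 2))) hρD
    have h1m : ∀ x ∈ Icc x₀ L, (1 : ℝ) - u x ^ 2 ≠ 0 :=
      fun x hx h => husq x hx (by linarith)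
    exact (ha'c.div hacont (fun x hx => hane x (hsubL hx))).mul
      ((hρcont.mul (hucont.pow 2)).div (continuousOn_const.sub (hucont.pow 2)) h1m)
  have hmono : ∀ x ∈ Ioc x₀ L,
      (1 < um → um < u x ∧ 0 < ρ x ∧ ρ x < ρm) ∧
      (um < 1 → 0 < u x ∧ u x < um ∧ ρm < ρ x) := by
    intro x hx
    have hxIcc : x ∈ Icc x₀ L := ⟨hx.1.le, hx.2⟩
    have hWgt := (hWmono x hxIcc).2 hx.1
    have hhalf := hWhalf x hxIcc
    have hor := hord (W x) hWgt hhalf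
    have hu0' := hu0 x hxIcc
    constructor
    · intro h1
      have hu : um < u x := hor.1 h1
      refine ⟨hu, by simp only [hρdef]; positivity, ?_⟩
      have hsqlt : um ^ 2 < u x ^ 2 := by nlinarith
      have he : Real.exp ((um ^ 2 - u x ^ 2) / 2) < 1 :=
        Real.exp_lt_one_iff.2 (by linarith)
      simp only [hρdef]
      nlinarith [Real.exp_pos ((um ^ 2 - u x ^ 2) / 2)]
    · intro h1
      have hu : u x < um := hor.2 h1
      refine ⟨hu0', hu, ?_⟩
      have hsqlt : u x ^ 2 < um ^ 2 := by nlinarith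
      have he : 1 < Real.exp ((um ^ 2 - u x ^ 2) / 2) :=
        Real.one_lt_exp_iff.2 (by linarith)
      simp only [hρdef]
      nlinarith
  refine ⟨ρ, u, hρcd, hucd, hρx₀, hux₀, fun x hx => ⟨hρD x hx, huD x hx⟩, ?_, hmono⟩
  -- uniqueness
  intro ρ₂ u₂ hD2 hρ₂0 hu₂0
  have hu₂D : ∀ x ∈ Icc x₀ L,
      HasDerivWithinAt u₂ (a' x / a x * (u₂ x / (u₂ x ^ 2 - 1))) (Icc x₀ L) x :=
    fun x hx => (hD2 x hx).2
  have hu₂c : ContinuousOn u₂ (Icc x₀ L) := fun x hx => (hu₂D x hx).continuousWithinAt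
  have hu₂B : ∀ x ∈ Icc x₀ L, u₂ x ∈ B := by
    by_contra hcon
    push_neg at hcon
    obtain ⟨z, hz, hzB⟩ := hcon
    set S : Set ℝ := Icc x₀ L ∩ u₂ ⁻¹' Bᶜ with hSdef
    have hSne : S.Nonempty := ⟨z, hz, hzB⟩
    have hSclosed : IsClosed S :=
      hu₂c.preimage_isClosed_of_isClosed isClosed_Icc hBopen.isClosed_compl
    have hbdd : BddBelow S := ⟨x₀, fun t ht => ht.1.1⟩
    set s := sInf S with hsdef
    have hsS : s ∈ S := hSclosed.csInf_mem hSne hbdd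
    have hsIcc : s ∈ Icc x₀ L := hsS.1
    have hsB : u₂ s ∉ B := hsS.2
    have hx₀s : x₀ < s := by
      rcases eq_or_lt_of_le hsIcc.1 with h | h
      · exfalso; apply hsB; rw [← h, hu₂0]; exact humB
      · exact h
    have hIco : ∀ t ∈ Ico x₀ s, u₂ t ∈ B := by
      intro t ht
      by_contra htB
      have : s ≤ t := csInf_le hbdd ⟨⟨ht.1, ht.2.le.trans hsIcc.2⟩, htB⟩
      linarith [ht.2]
    haveI hNB : (nhdsWithin s (Ico x₀ s)).NeBot := by
      apply mem_closure_iff_nhdsWithin_neBot.1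
      rw [closure_Ico hx₀s.ne]
      exact ⟨hx₀s.le, le_rfl⟩
    have htend : Tendsto u₂ (nhdsWithin s (Ico x₀ s)) (nhds (u₂ s)) :=
      (hu₂c s hsIcc).mono (fun t ht => ⟨ht.1, ht.2.le.trans hsIcc.2⟩)
    have hclos : u₂ s ∈ closure B :=
      mem_closure_of_tendsto htend (eventually_mem_nhdsWithin.mono (fun t ht => hIco t ht))
    rcases hBfr _ hclos hsB with h0 | h1
    · -- u₂ s = 0 : the flow cannot reach vacuum
      set M := nozF um + (Real.log (a L) - Real.log (a x₀)) with hM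
      have h2 : ∀ᶠ t in nhdsWithin s (Ico x₀ s), u₂ t < Real.exp (-M) := by
        apply htend.eventually_lt_const
        rw [h0]
        exact Real.exp_pos _
      obtain ⟨t, htlt, htIco⟩ := (h2.and eventually_mem_nhdsWithin).exists
      have htIcc : t ∈ Icc x₀ L := ⟨htIco.1, htIco.2.le.trans hsIcc.2⟩
      have hinE : ∀ r ∈ Ico x₀ t, 0 < u₂ r ∧ u₂ r ≠ 1 :=
        fun r hr => hBsub _ (hIco r ⟨hr.1, hr.2.trans htIco.2⟩)
      have hu₂t : 0 < u₂ t := (hBsub _ (hIco t htIco)).1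
      have hc := noz_conserved ha hapos hx₀Icc hu₂D htIcc hinE hu₂t.ne'
      rw [hu₂0] at hc
      have hlt : Real.log (u₂ t) < -M := by
        have := Real.log_lt_log hu₂t htlt
        rwa [Real.log_exp] at this
      have hFge : -Real.log (u₂ t) ≤ nozF (u₂ t) := by
        unfold nozF
        nlinarith [sq_nonneg (u₂ t)]
      have hlogle : Real.log (a t) ≤ Real.log (a L) :=
        Real.log_le_log (hapos t (hsubL htIcc))
          (hamono.monotoneOn (hsubL htIcc) hLIcc htIcc.2)
      linarith
    · -- u₂ s = 1 : the flow cannot reach the sonic state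
      have hinE : ∀ r ∈ Ico x₀ s, 0 < u₂ r ∧ u₂ r ≠ 1 := fun r hr => hBsub _ (hIco r hr)
      have hc := noz_conserved ha hapos hx₀Icc hu₂D hsIcc hinE (by rw [h1]; norm_num)
      rw [hu₂0, h1, nozF_one] at hc
      have hlogle : Real.log (a x₀) ≤ Real.log (a s) :=
        Real.log_le_log (hapos x₀ hx₀Icc)
          (hamono.monotoneOn hx₀Icc (hsubL hsIcc) hsIcc.1)
      linarith
  have hu₂eq : ∀ x ∈ Icc x₀ L, u₂ x = u x := by
    intro x hx
    have hinE : ∀ r ∈ Ico x₀ x, 0 < u₂ r ∧ u₂ r ≠ 1 :=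
      fun r hr => hBsub _ (hu₂B r ⟨hr.1, hr.2.le.trans hx.2⟩)
    have hc := noz_conserved ha hapos hx₀Icc hu₂D hx hinE (hBsub _ (hu₂B x hx)).1.ne'
    rw [hu₂0] at hc
    have hWx : nozF (u₂ x) = W x := by
      simp only [hWdef]
      linarith
    exact hinj (hu₂B x hx) (huB x hx) (hWx.trans (hFu x hx).symm)
  intro x hx
  refine ⟨?_, hu₂eq x hx⟩
  have hρ₂c : ContinuousOn ρ₂ (Icc x₀ L) := fun t ht => ((hD2 t ht).1).continuousWithinAt
  have hHc : ContinuousOn (fun t => ρ₂ t * Real.exp (u₂ t ^ 2 / 2)) (Icc x₀ L) :=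
    hρ₂c.mul (Real.continuous_exp.comp_continuousOn ((hu₂c.pow 2).div_const 2))
  have hHd : ∀ t ∈ Ico x₀ L,
      HasDerivWithinAt (fun t => ρ₂ t * Real.exp (u₂ t ^ 2 / 2)) 0 (Ici t) t := by
    intro t ht
    have htIcc : t ∈ Icc x₀ L := ⟨ht.1, ht.2.le⟩
    have h1 := (hD2 t htIcc).1
    have h2 := (((hD2 t htIcc).2.pow 2).div_const 2).exp
    have h3 := h1.mul h2
    obtain ⟨hp, hn1⟩ := hBsub _ (hu₂B t htIcc)
    have hsq := sq_sub_one_ne hp hn1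
    have h1m : (1 : ℝ) - u₂ t ^ 2 ≠ 0 := fun h => hsq (by linarith)
    have ha0 : a t ≠ 0 := hane t (hsubL htIcc)
    have h3' : HasDerivWithinAt (fun t => ρ₂ t * Real.exp (u₂ t ^ 2 / 2)) 0 (Icc x₀ L) t := by
      refine h3.congr_deriv ?_
      simp only [Pi.pow_apply]
      push_cast
      field_simp
      ring
    apply h3'.mono_of_mem_nhdsWithin
    apply mem_of_superset (Icc_mem_nhdsGE_of_mem ⟨le_rfl, ht.2⟩)
    exact Icc_subset_Icc htIcc.1 le_rfl
  have hconst := constant_of_has_deriv_right_zero hHc hHd x hx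
  rw [hρ₂0, hu₂0] at hconst
  have hux := hu₂eq x hx
  rw [hux] at hconst
  have hexpne : Real.exp (u x ^ 2 / 2) ≠ 0 := (Real.exp_pos _).ne'
  have hsplit : ρm * Real.exp (um ^ 2 / 2) =
      ρm * Real.exp ((um ^ 2 - u x ^ 2) / 2) * Real.exp (u x ^ 2 / 2) := by
    rw [mul_assoc, ← Real.exp_add]
    congr 2
    ring
  rw [hsplit] at hconst
  have := mul_right_cancel₀ hexpne hconst
  simp only [hρdef]
  exact this

theorem steady_flow_divergent_nozzle
    (L : ℝ) (hL : 0 < L) (a a' : ℝ → ℝ)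
    (ha : ∀ x ∈ Set.Icc (0 : ℝ) L, HasDerivWithinAt a (a' x) (Set.Icc 0 L) x)
    (ha'cont : ContinuousOn a' (Set.Icc 0 L))
    (hapos : ∀ x ∈ Set.Icc (0 : ℝ) L, 0 < a x)
    (ha'pos : ∀ x ∈ Set.Icc (0 : ℝ) L, 0 < a' x) :
    ∀ x₀ ∈ Set.Ico (0 : ℝ) L, ∀ ρm um : ℝ, 0 < ρm → 0 < um → um ≠ 1 →
      ∃ ρ u : ℝ → ℝ,
        ContDiffOn ℝ 1 ρ (Set.Icc x₀ L) ∧ ContDiffOn ℝ 1 u (Set.Icc x₀ L) ∧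
        ρ x₀ = ρm ∧ u x₀ = um ∧
        (∀ x ∈ Set.Icc x₀ L,
            HasDerivWithinAt ρ (a' x / a x * (ρ x * u x ^ 2 / (1 - u x ^ 2)))
              (Set.Icc x₀ L) x ∧
            HasDerivWithinAt u (a' x / a x * (u x / (u x ^ 2 - 1)))
              (Set.Icc x₀ L) x) ∧
        (∀ ρ₂ u₂ : ℝ → ℝ,
          (∀ x ∈ Set.Icc x₀ L,
              HasDerivWithinAt ρ₂ (a' x / a x * (ρ₂ x * u₂ x ^ 2 / (1 - u₂ x ^ 2)))
                (Set.Icc x₀ L) x ∧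
              HasDerivWithinAt u₂ (a' x / a x * (u₂ x / (u₂ x ^ 2 - 1)))
                (Set.Icc x₀ L) x) →
          ρ₂ x₀ = ρm → u₂ x₀ = um →
          ∀ x ∈ Set.Icc x₀ L, ρ₂ x = ρ x ∧ u₂ x = u x) ∧
        (∀ x ∈ Set.Ioc x₀ L,
          (1 < um → um < u x ∧ 0 < ρ x ∧ ρ x < ρm) ∧
          (um < 1 → 0 < u x ∧ u x < um ∧ ρm < ρ x)) := by
  intro x₀ hx₀ ρm um hρm hum hum1
  rcases hum1.lt_or_gt with hc | hc
  · -- subsonic case : um < 1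
    apply noz_aux L hL a a' ha ha'cont hapos ha'pos x₀ hx₀ ρm um hρm hum hum1
      (Set.Ioo 0 1) nozM isOpen_Ioo
    · intro v hv
      exact ⟨hv.1, hv.2.ne⟩
    · intro v hv hv2
      rw [closure_Ioo (by norm_num : (0 : ℝ) ≠ 1)] at hv
      rcases eq_or_lt_of_le hv.1 with h | h0
      · exact Or.inl h.symm
      rcases eq_or_lt_of_le hv.2 with h | h1
      · exact Or.inr h
      · exact absurd ⟨h0, h1⟩ hv2
    · exact ⟨hum, hc⟩
    · exact nozF_strictAntiOn.injOn.mono Set.Ioo_subset_Ioc_self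
    · intro y hy
      obtain ⟨⟨h1, h2⟩, h3⟩ := nozM_spec hy
      exact ⟨⟨h1, h2⟩, h3⟩
    · exact fun y hy => nozM_hasDerivAt hy
    · intro y hgt hy
      obtain ⟨⟨h0, h1'⟩, heq⟩ := nozM_spec hy
      constructor
      · intro h; exact absurd h (by linarith)
      · intro _
        by_contra hle
        push_neg at hle
        have := nozF_strictAntiOn.antitoneOn ⟨hum, hc.le⟩ ⟨h0, h1'.le⟩ hle
        rw [heq] at this
        linarith
  · -- supersonic case : 1 < um
    apply noz_aux L hL a a' ha ha'cont hapos ha'pos x₀ hx₀ ρm um hρm hum hum1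
      (Set.Ioi 1) nozP isOpen_Ioi
    · intro v hv
      have : (1:ℝ) < v := hv
      exact ⟨by linarith, by linarith⟩
    · intro v hv hv2
      rw [closure_Ioi] at hv
      right
      exact le_antisymm (not_lt.1 hv2) hv
    · exact hc
    · exact nozF_strictMonoOn.injOn.mono Set.Ioi_subset_Ici_self
    · intro y hy
      obtain ⟨h1, h2⟩ := nozP_spec hy
      exact ⟨h1, h2⟩
    · exact fun y hy => nozP_hasDerivAt hy
    · intro y hgt hy
      obtain ⟨h1', heq⟩ := nozP_spec hy
      constructor
      · intro _
        by_contra hle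
        push_neg at hle
        have := nozF_strictMonoOn.monotoneOn (mem_Ici.2 h1'.le) (mem_Ici.2 hc.le) hle
        rw [heq] at this
        linarith
      · intro h; exact absurd h (by linarith)
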